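/- Soundness of the loop induction axiom: For every interpretation I, valuation v ∈ Val̂, ω ∈ Ω, program α of the SDE-free language, and formula φ, the formula [α*]sure(φ → [α]φ) → sure(φ → [α*]φ) evaluates to ⊕ under I at v and ω (where [α]ψ abbreviates ¬⟨α⟩¬ψ). -/

import Mathlib

open scoped Classical

noncomputable section

/-! ## Basic domains -/

/-- `ℝ_⊥ = ℝ ∪ {⊥}`, with `⊥` modeled as `none`. -/
def Rbot : Type := Option ℝ

namespace Rbot

/-- The undefined element `⊥`. -/
def bot : Rbot := none

/-- Embedding of the reals. -/
def real (r : ℝ) : Rbot := Option.some r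

/-- Addition, with `⊥` absorbing. -/
def add (a b : Rbot) : Rbot := Option.bind a fun x => Option.map (fun y => x + y) b

/-- Multiplication, with `⊥` absorbing. -/
def mul (a b : Rbot) : Rbot := Option.bind a fun x => Option.map (fun y => x * y) b

/-- The Borel σ-algebra of the topology generated by the open sets of `ℝ`
together with `{⊥}`: a set is measurable iff its trace on `ℝ` is Borel. -/
instance : MeasurableSpace Rbot :=
  MeasurableSpace.map Option.some (inferInstance : MeasurableSpace ℝ)

end Rbot

/-- Three-valued Łukasiewicz truth values `⊖ < ⊘ < ⊕`, modeled as `Fin 3`. -/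
abbrev L : Type := Fin 3

namespace L
/-- false `⊖` -/
def fls : L := 0
/-- indeterminate `⊘` -/
def ind : L := 1
/-- true `⊕` -/
def tru : L := 2
/-- negation: swaps `⊕` and `⊖`, fixes `⊘`. -/
def neg (a : L) : L := tru - a
end L

/-- `Val̂`: maps `V → ℝ_⊥` that are `⊥` at all but finitely many variables
(the countable variable set `V` is modeled as `ℕ`). -/
def ValHat : Type := {f : ℕ → Rbot // {n | f n ≠ Rbot.bot}.Finite}

instance : MeasurableSpace ValHat :=
  @Subtype.instMeasurableSpace (ℕ → Rbot) _ MeasurableSpace.pi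

/-- Update a valuation at one variable. -/
def ValHat.update (v : ValHat) (x : ℕ) (r : Rbot) : ValHat :=
  ⟨Function.update v.1 x r, by
    apply (v.2.union (Set.finite_singleton x)).subset
    intro n hn
    rcases eq_or_ne n x with h | h
    · exact Or.inr h
    · refine Or.inl ?_
      simpa [Function.update_of_ne h] using hn⟩

/-- `Val = Val̂ ∪ {▽, △}`: valuations together with the crash point `▽`
(`crash`) and the out-of-bounds point `△` (`oob`). -/
inductive Val where
  | ok : ValHat → Val
  | crash : Val
  | oob : Val

/-- Measurable sets of `Val` are the sets whose trace on `Val̂` is measurable. -/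
instance : MeasurableSpace Val := MeasurableSpace.map Val.ok inferInstance

/-- Choice sequences: binary streams that are `0` (`false`) at all but
finitely many indices. -/
def Cseq : Type := {c : ℕ → Bool // {n | c n = true}.Finite}

namespace Cseq

def head (C : Cseq) : Bool := C.1 0

def tail (C : Cseq) : Cseq :=
  ⟨fun n => C.1 (n + 1), by
    have h : {n | C.1 (n + 1) = true} = Nat.succ ⁻¹' {n | C.1 n = true} := rfl
    rw [h]
    exact C.2.preimage Nat.succ_injective.injOn⟩

/-- `tail(n, C) := tailⁿ(C)`. -/
def tailN (n : ℕ) (C : Cseq) : Cseq := tail^[n] C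

/-- `nat(C)`: the least position holding a `0`. -/
def nat (C : Cseq) : ℕ := sInf {p | C.1 p = false}

end Cseq

/-! ## Sample space -/

/-- The fixed sample space `(Ω, F, P)`, carrying a family of i.i.d.
uniform-`[0,1]` random variables. -/
structure SampleSpace where
  Ω : Type
  [mΩ : MeasurableSpace Ω]
  P : MeasureTheory.Measure Ω
  isProb : MeasureTheory.IsProbabilityMeasure P
  U : ℕ → Ω → ℝ
  U_meas : ∀ n, Measurable (U n)
  U_unif : ∀ n, MeasureTheory.Measure.map (U n) P = MeasureTheory.volume.restrict (Set.Icc (0 : ℝ) 1)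
  U_indep : ProbabilityTheory.iIndepFun U P

attribute [instance] SampleSpace.mΩ

/-! ## Syntax of the SDE-free language -/

mutual
/-- Terms: constants, variables, special 0-ary symbols `•_i` (used by
substitutions), sums, products, function symbols, definite descriptions. -/
inductive Term where
  | const : ℝ → Term
  | var : ℕ → Term
  | bullet : ℕ → Term
  | add : Term → Term → Term
  | mul : Term → Term → Term
  | func : (d : ℕ) → ℕ → (Fin d → Term) → Term
  | iota : ℕ → Finset ℕ → Formula → Term

/-- Programs of the SDE-free fragment. -/
inductive Program where
  | assign : ℕ → Term → Program
  | sample : ℕ → Program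
  | ite : Formula → Program → Program → Program
  | choice : Program → Program → Program
  | seq : Program → Program → Program
  | star : Program → Program
  | skip : Program
  | fail : Program
  | psym : ℕ → Program

/-- Formulas. -/
inductive Formula where
  | ge : Term → Term → Formula
  | not : Formula → Formula
  | and : Formula → Formula → Formula
  | pred : (d : ℕ) → ℕ → (Fin d → Term) → Formula
  | dia : Program → Formula → Formula
  | sure : Formula → Formula
end

/-! ## Interpretations -/

/-- An interpretation: measurable meanings for function and predicate symbols,
values for the special symbols `•_i`, meanings for program symbols satisfying
the no-look-ahead and measurability conditions, and a countable set of
stop times `I_times ⊆ ℝ⁺`. -/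
structure Interp (S : SampleSpace) where
  fn : ℕ → (d : ℕ) → (Fin d → Rbot) → Rbot
  fn_meas : ∀ name d, Measurable (fn name d)
  bullet : ℕ → Rbot
  pr : ℕ → (d : ℕ) → (Fin d → Rbot) → S.Ω → L
  pr_meas : ∀ name d, Measurable (Function.uncurry (pr name d))
  pg : ℕ → Val → S.Ω → Cseq → Val × Cseq
  pg_nla : ∀ name v ω C, ∃ n, (pg name v ω C).2 = Cseq.tailN n C ∧
    ∀ C' : Cseq, (∀ k < n, C'.1 k = C.1 k) →
      (pg name v ω C').1 = (pg name v ω C).1 ∧ (pg name v ω C').2 = Cseq.tailN n C'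
  pg_meas : ∀ name (z : S.Ω → Val), Measurable z → ∀ C,
    Measurable fun ω => (pg name (z ω) ω C).1
  times : Set ℝ
  times_cnt : times.Countable
  times_pos : ∀ t ∈ times, 0 ≤ t

/-! ## Semantics -/

mutual
/-- Term semantics `I𝐱⟦θ⟧ : Val̂ → ℝ_⊥`. -/
noncomputable def tSem (S : SampleSpace) (I : Interp S) : Term → ValHat → Rbot
  | .const c, _ => Rbot.real c
  | .var x, v => v.1 x
  | .bullet i, _ => I.bullet i
  | .add θ κ, v => Rbot.add (tSem S I θ v) (tSem S I κ v)
  | .mul θ κ, v => Rbot.mul (tSem S I θ v) (tSem S I κ v)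
  | .func d name ts, v => I.fn name d fun i => tSem S I (ts i) v
  | .iota i ds φ, v =>
      let can : ValHat → Rbot := fun u =>
        if h : ∃! y : ValHat, (∀ n, n ∉ ds → y.1 n = u.1 n) ∧
            ∀ ω : S.Ω, fSem S I φ y ω 0 = L.tru
        then h.choose.1 i else Rbot.bot
      if Measurable can then can v else Rbot.bot

/-- Program semantics `Iv⟦α⟧(ω, C) ∈ Val × 𝒞`, threading a counter used to
pick never-before-used uniform random variables for `x := *`. -/
noncomputable def pSem (S : SampleSpace) (I : Interp S) :
    Program → Val → S.Ω → Cseq → ℕ → Val × Cseq × ℕ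
  | _, .crash, _, C, n => (.crash, C, n)
  | _, .oob, _, C, n => (.oob, C, n)
  | .assign x θ, .ok v, _, C, n =>
      let r := tSem S I θ v
      if r = Rbot.bot then (.crash, C, n) else (.ok (v.update x r), C, n)
  | .sample x, .ok v, ω, C, n => (.ok (v.update x (Rbot.real (S.U n ω))), C, n + 1)
  | .ite H α β, .ok v, ω, C, n =>
      if fSem S I H v ω n = L.tru then pSem S I α (.ok v) ω C n
      else if fSem S I H v ω n = L.fls then pSem S I β (.ok v) ω C n
      else (.crash, C, n)
  | .choice α β, .ok v, ω, C, n =>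
      if C.head = false then pSem S I α (.ok v) ω C.tail n
      else pSem S I β (.ok v) ω C.tail n
  | .seq α β, .ok v, ω, C, n =>
      let r := pSem S I α (.ok v) ω C n
      pSem S I β r.1 ω r.2.1 r.2.2
  | .star α, .ok v, ω, C, n =>
      (Nat.rec (motive := fun _ => Val → Cseq → ℕ → Val × Cseq × ℕ)
        (fun u D m => (u, D, m))
        (fun _ ih u D m =>
          let r := pSem S I α u ω D m
          ih r.1 r.2.1 r.2.2)
        C.nat) (.ok v) (Cseq.tailN C.nat C) n
  | .psym g, .ok v, ω, C, n => ((I.pg g (.ok v) ω C).1, (I.pg g (.ok v) ω C).2, n)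
  | .skip, .ok v, _, C, n => (.ok v, C, n)
  | .fail, .ok _, _, C, n => (.crash, C, n)

/-- Formula semantics `Iv⟦φ⟧(ω) ∈ L` (with the freshness counter threaded). -/
noncomputable def fSem (S : SampleSpace) (I : Interp S) :
    Formula → ValHat → S.Ω → ℕ → L
  | .ge θ κ, v, _, _ =>
      let a := tSem S I θ v
      let b := tSem S I κ v
      if a = Rbot.bot ∨ b = Rbot.bot then L.ind
      else if ∃ x y : ℝ, a = Rbot.real x ∧ b = Rbot.real y ∧ y ≤ x then L.tru
      else L.fls
  | .not φ, v, ω, n => L.neg (fSem S I φ v ω n)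
  | .and φ ψ, v, ω, n => min (fSem S I φ v ω n) (fSem S I ψ v ω n)
  | .pred d name ts, v, ω, _ => I.pr name d (fun i => tSem S I (ts i) v) ω
  | .dia α φ, v, ω, n =>
      sSup {l : L | ∃ C : Cseq,
        (pSem S I α (.ok v) ω C n).1 ≠ Val.oob ∧
        l = (match pSem S I α (.ok v) ω C n with
             | (Val.ok w, _, m) => fSem S I φ w ω m
             | _ => L.ind)}
  | .sure φ, v, ω, n => if fSem S I φ v ω n = L.tru then L.tru else L.fls
end

/-- `Iv⟦θ⟧` extended to `Val` by `I▽⟦θ⟧ = I△⟦θ⟧ = ⊥`. -/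
noncomputable def termVal (S : SampleSpace) (I : Interp S) (θ : Term) : Val → Rbot
  | .ok v => tSem S I θ v
  | _ => Rbot.bot

/-- `Iv⟦φ⟧(ω)` extended to `Val` by `I▽⟦φ⟧(ω) = I△⟦φ⟧(ω) = ⊘`. -/
noncomputable def fmlVal (S : SampleSpace) (I : Interp S) (φ : Formula) :
    Val → S.Ω → L
  | .ok v, ω => fSem S I φ v ω 0
  | _, _ => L.ind

/-- `Iv⟦α⟧(ω, C) ∈ Val × 𝒞`. -/
noncomputable def prgVal (S : SampleSpace) (I : Interp S) (α : Program)
    (v : Val) (ω : S.Ω) (C : Cseq) : Val × Cseq :=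
  ((pSem S I α v ω C 0).1, (pSem S I α v ω C 0).2.1)

/-! ## Expressions and subexpressions -/

/-- An expression: a term, a program, or a formula. -/
inductive Expr where
  | trm : Term → Expr
  | prg : Program → Expr
  | fml : Formula → Expr

/-- The immediate-subexpression relation. -/
inductive ImmSub : Expr → Expr → Prop
  | addL (θ κ : Term) : ImmSub (.trm θ) (.trm (.add θ κ))
  | addR (θ κ : Term) : ImmSub (.trm κ) (.trm (.add θ κ))
  | mulL (θ κ : Term) : ImmSub (.trm θ) (.trm (.mul θ κ))
  | mulR (θ κ : Term) : ImmSub (.trm κ) (.trm (.mul θ κ))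
  | funcArg (d name : ℕ) (ts : Fin d → Term) (i : Fin d) :
      ImmSub (.trm (ts i)) (.trm (.func d name ts))
  | iotaBody (i : ℕ) (ds : Finset ℕ) (φ : Formula) :
      ImmSub (.fml φ) (.trm (.iota i ds φ))
  | assignT (x : ℕ) (θ : Term) : ImmSub (.trm θ) (.prg (.assign x θ))
  | iteH (H : Formula) (α β : Program) : ImmSub (.fml H) (.prg (.ite H α β))
  | iteL (H : Formula) (α β : Program) : ImmSub (.prg α) (.prg (.ite H α β))
  | iteR (H : Formula) (α β : Program) : ImmSub (.prg β) (.prg (.ite H α β))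
  | choiceL (α β : Program) : ImmSub (.prg α) (.prg (.choice α β))
  | choiceR (α β : Program) : ImmSub (.prg β) (.prg (.choice α β))
  | seqL (α β : Program) : ImmSub (.prg α) (.prg (.seq α β))
  | seqR (α β : Program) : ImmSub (.prg β) (.prg (.seq α β))
  | starBody (α : Program) : ImmSub (.prg α) (.prg (.star α))
  | geL (θ κ : Term) : ImmSub (.trm θ) (.fml (.ge θ κ))
  | geR (θ κ : Term) : ImmSub (.trm κ) (.fml (.ge θ κ))
  | notBody (φ : Formula) : ImmSub (.fml φ) (.fml (.not φ))
  | andL (φ ψ : Formula) : ImmSub (.fml φ) (.fml (.and φ ψ))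
  | andR (φ ψ : Formula) : ImmSub (.fml ψ) (.fml (.and φ ψ))
  | predArg (d name : ℕ) (ts : Fin d → Term) (i : Fin d) :
      ImmSub (.trm (ts i)) (.fml (.pred d name ts))
  | diaProg (α : Program) (φ : Formula) : ImmSub (.prg α) (.fml (.dia α φ))
  | diaBody (α : Program) (φ : Formula) : ImmSub (.fml φ) (.fml (.dia α φ))
  | sureBody (φ : Formula) : ImmSub (.fml φ) (.fml (.sure φ))

/-- `Subexpr a b`: `a` is a (reflexive-transitive) subexpression of `b`. -/
def Subexpr (a b : Expr) : Prop := Relation.ReflTransGen ImmSub a b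

/-- A formula contains no program as a subexpression. -/
def ProgFree (φ : Formula) : Prop := ∀ α : Program, ¬ Subexpr (.prg α) (.fml φ)

/-- A formula contains no formula (predicate) symbol as a subexpression. -/
def PredFree (φ : Formula) : Prop :=
  ∀ (d name : ℕ) (ts : Fin d → Term), ¬ Subexpr (.fml (.pred d name ts)) (.fml φ)

/-- Well-formedness of an expression of the SDE-free language: bodies of
definite descriptions contain no programs and no formula symbols, and the
tests of conditionals contain no programs. -/
def ExprWF (e : Expr) : Prop :=
  (∀ (i : ℕ) (ds : Finset ℕ) (φ : Formula),
      Subexpr (.trm (.iota i ds φ)) e → ProgFree φ ∧ PredFree φ) ∧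
  (∀ (H : Formula) (α β : Program),
      Subexpr (.prg (.ite H α β)) e → ProgFree H)

abbrev Term.WF (θ : Term) : Prop := ExprWF (.trm θ)
abbrev Program.WF (α : Program) : Prop := ExprWF (.prg α)
abbrev Formula.WF (φ : Formula) : Prop := ExprWF (.fml φ)

/-! ## Derived connectives -/

namespace Formula

/-- `φ ∨ ψ := ¬(¬φ ∧ ¬ψ)`. -/
def or (φ ψ : Formula) : Formula := .not (.and (.not φ) (.not ψ))

/-- `ind(φ) := ¬sure(φ) ∧ ¬sure(¬φ)`. -/
def indF (φ : Formula) : Formula := .and (.not (.sure φ)) (.not (.sure (.not φ)))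

/-- `φ₁ → φ₂ := ¬φ₁ ∨ φ₂ ∨ (ind(φ₁) ∧ ind(φ₂))`. -/
def imp (φ ψ : Formula) : Formula := or (or (.not φ) ψ) (.and (indF φ) (indF ψ))

/-- `φ₁ ↔ φ₂ := (φ₁ → φ₂) ∧ (φ₂ → φ₁)`. -/
def iff (φ ψ : Formula) : Formula := .and (imp φ ψ) (imp ψ φ)

/-- `[α]φ := ¬⟨α⟩¬φ`. -/
def box (α : Program) (φ : Formula) : Formula := .not (.dia α (.not φ))

/-- `crash(α) := ind([α] 0 ≥ 0)`. -/
def crashF (α : Program) : Formula := indF (box α (.ge (.const 0) (.const 0)))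

end Formula

/-! ## Pathwise validity -/

/-- `T ⊨ φ`: φ holds at every interpretation whose stop times are `T`,
every valuation in `Val̂`, and every `ω`. -/
def Sat (S : SampleSpace) (T : Set ℝ) (φ : Formula) : Prop :=
  ∀ I : Interp S, I.times = T → ∀ (v : ValHat) (ω : S.Ω), fSem S I φ v ω 0 = L.tru

/-- `T ⊩⊩ φ`: every countable stop-time set `T′ ⊇ T` satisfies `T′ ⊨ φ`. -/
def Validates (S : SampleSpace) (T : Set ℝ) (φ : Formula) : Prop :=
  ∀ T' : Set ℝ, T'.Countable → (∀ t ∈ T', 0 ≤ t) → T ⊆ T' → Sat S T' φ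

/-- φ is pathwise valid iff some countable set of stop times validates it. -/
def PathwiseValid (S : SampleSpace) (φ : Formula) : Prop :=
  ∃ T : Set ℝ, T.Countable ∧ (∀ t ∈ T, 0 ≤ t) ∧ Validates S T φ

end

noncomputable section LoopInductionAux

namespace Cseq

theorem tail_apply (C : Cseq) (k : ℕ) : (tail C).1 k = C.1 (k + 1) := rfl

theorem tailN_apply (n : ℕ) (C : Cseq) (k : ℕ) : (tailN n C).1 k = C.1 (n + k) := by
  induction n generalizing C with
  | zero => rw [Nat.zero_add]; rfl
  | succ n ih =>
      have h : tailN (n + 1) C = tailN n (tail C) := Function.iterate_succ_apply tail n C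
      rw [h, ih, tail_apply, show n + k + 1 = n + 1 + k from by omega]

theorem exists_false (C : Cseq) : ∃ p, C.1 p = false := by
  by_contra h
  push_neg at h
  have hall : {n | C.1 n = true} = Set.univ :=
    Set.eq_univ_of_forall (fun p => by
      cases hb : C.1 p
      · exact absurd hb (h p)
      · exact hb)
  have hfin := C.2
  rw [hall] at hfin
  exact Set.infinite_univ hfin

theorem nat_false (C : Cseq) : C.1 C.nat = false :=
  Nat.sInf_mem (exists_false C)

theorem nat_eq (C : Cseq) (j : ℕ) (h1 : ∀ p < j, C.1 p = true) (h2 : C.1 j = false) :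
    C.nat = j := by
  refine le_antisymm (Nat.sInf_le h2) (le_of_not_gt fun h => ?_)
  have ht := h1 _ h
  have hf := nat_false C
  rw [ht] at hf
  exact Bool.noConfusion hf

/-- `j` ones (trues) followed by `E`. -/
def onesThen (j : ℕ) (E : Cseq) : Cseq :=
  ⟨fun k => if k < j then true else E.1 (k - j), by
    have hsub : {n | (if n < j then true else E.1 (n - j)) = true} ⊆
        Set.Iio j ∪ (fun m => m + j) '' {n | E.1 n = true} := by
      intro n hn
      by_cases hnj : n < j
      · exact Or.inl hnj
      · rw [Set.mem_setOf_eq, if_neg hnj] at hn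
        exact Or.inr ⟨n - j, hn, by show n - j + j = n; omega⟩
    exact (((Set.finite_Iio j).union (E.2.image _)).subset hsub)⟩

theorem nat_onesThen (j : ℕ) (E : Cseq) (h : E.1 0 = false) : (onesThen j E).nat = j := by
  refine nat_eq _ j (fun p hp => if_pos hp) ?_
  show (if j < j then true else E.1 (j - j)) = false
  rw [if_neg (lt_irrefl j)]
  simpa using h

theorem tailN_onesThen (j : ℕ) (E : Cseq) : tailN j (onesThen j E) = E := by
  refine Subtype.ext (funext fun k => ?_)
  rw [tailN_apply]
  show (if j + k < j then true else E.1 (j + k - j)) = E.1 k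
  rw [if_neg (by omega), show j + k - j = k from by omega]

end Cseq

section

variable (S : SampleSpace) (I : Interp S)

theorem pSem_crash (α : Program) (ω : S.Ω) (C : Cseq) (n : ℕ) :
    pSem S I α Val.crash ω C n = (Val.crash, C, n) := by
  cases α <;> simp only [pSem]

theorem pSem_oob (α : Program) (ω : S.Ω) (C : Cseq) (n : ℕ) :
    pSem S I α Val.oob ω C n = (Val.oob, C, n) := by
  cases α <;> simp only [pSem]

/-- Iterated runs of `α`. -/
def iterRun (α : Program) (ω : S.Ω) (k : ℕ) : Val → Cseq → ℕ → Val × Cseq × ℕ :=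
  Nat.rec (motive := fun _ => Val → Cseq → ℕ → Val × Cseq × ℕ)
    (fun u D m => (u, D, m))
    (fun _ ih u D m =>
      let r := pSem S I α u ω D m
      ih r.1 r.2.1 r.2.2) k

theorem pSem_star (α : Program) (v : ValHat) (ω : S.Ω) (C : Cseq) (n : ℕ) :
    pSem S I (.star α) (.ok v) ω C n =
      iterRun S I α ω C.nat (.ok v) (Cseq.tailN C.nat C) n := by
  simp only [pSem]
  rfl

theorem iterRun_succ_back (α : Program) (ω : S.Ω) (k : ℕ) (u : Val) (C : Cseq) (n : ℕ) :
    iterRun S I α ω (k + 1) u C n =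
      pSem S I α (iterRun S I α ω k u C n).1 ω
        (iterRun S I α ω k u C n).2.1 (iterRun S I α ω k u C n).2.2 := by
  induction k generalizing u C n with
  | zero => rfl
  | succ k ih =>
      show iterRun S I α ω (k + 1) (pSem S I α u ω C n).1 (pSem S I α u ω C n).2.1
          (pSem S I α u ω C n).2.2 = _
      rw [ih]
      rfl
theorem fSem_not (φ : Formula) (v : ValHat) (ω : S.Ω) (n : ℕ) :
    fSem S I (.not φ) v ω n = L.neg (fSem S I φ v ω n) := by
  simp only [fSem]

theorem fSem_sure_of_tru {φ : Formula} {v : ValHat} {ω : S.Ω} {n : ℕ}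
    (h : fSem S I φ v ω n = L.tru) : fSem S I (.sure φ) v ω n = L.tru := by
  simp only [fSem]
  rw [if_pos h]

theorem fSem_sure_of_ne {φ : Formula} {v : ValHat} {ω : S.Ω} {n : ℕ}
    (h : fSem S I φ v ω n ≠ L.tru) : fSem S I (.sure φ) v ω n = L.fls := by
  simp only [fSem]
  rw [if_neg h]

theorem fSem_imp_tru_iff (φ₁ φ₂ : Formula) (v : ValHat) (ω : S.Ω) (n : ℕ) :
    fSem S I (Formula.imp φ₁ φ₂) v ω n = L.tru ↔
      (fSem S I φ₁ v ω n = L.fls ∨ fSem S I φ₂ v ω n = L.tru ∨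
        (fSem S I φ₁ v ω n = L.ind ∧ fSem S I φ₂ v ω n = L.ind)) := by
  unfold Formula.imp Formula.or Formula.indF
  simp only [fSem]
  have tri : ∀ x : L, x = L.fls ∨ x = L.ind ∨ x = L.tru := by decide
  rcases tri (fSem S I φ₁ v ω n) with h1 | h1 | h1 <;>
    rcases tri (fSem S I φ₂ v ω n) with h2 | h2 | h2 <;>
      simp only [h1, h2] <;> decide

/-- The value that a run contributes to the supremum in the semantics of `⟨α⟩φ`. -/
def runVal (α : Program) (φ : Formula) (v : ValHat) (ω : S.Ω) (C : Cseq) (n : ℕ) : L :=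
  match pSem S I α (.ok v) ω C n with
  | (Val.ok w, _, m) => fSem S I φ w ω m
  | _ => L.ind

theorem fSem_dia (α : Program) (φ : Formula) (v : ValHat) (ω : S.Ω) (n : ℕ) :
    fSem S I (.dia α φ) v ω n = sSup {l : L | ∃ C : Cseq,
      (pSem S I α (.ok v) ω C n).1 ≠ Val.oob ∧ l = runVal S I α φ v ω C n} := by
  simp only [fSem]
  rfl

theorem runVal_ok {α : Program} {φ : Formula} {v : ValHat} {ω : S.Ω} {C : Cseq} {n : ℕ}
    {w : ValHat} (h : (pSem S I α (.ok v) ω C n).1 = Val.ok w) :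
    runVal S I α φ v ω C n = fSem S I φ w ω (pSem S I α (.ok v) ω C n).2.2 := by
  have he : pSem S I α (.ok v) ω C n =
      (Val.ok w, (pSem S I α (.ok v) ω C n).2.1, (pSem S I α (.ok v) ω C n).2.2) := by
    rw [← h]
  unfold runVal
  rw [he]

theorem runVal_crash {α : Program} {φ : Formula} {v : ValHat} {ω : S.Ω} {C : Cseq} {n : ℕ}
    (h : (pSem S I α (.ok v) ω C n).1 = Val.crash) :
    runVal S I α φ v ω C n = L.ind := by
  have he : pSem S I α (.ok v) ω C n =
      (Val.crash, (pSem S I α (.ok v) ω C n).2.1, (pSem S I α (.ok v) ω C n).2.2) := by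
    rw [← h]
  unfold runVal
  rw [he]

theorem box_tru_iff (α : Program) (φ : Formula) (v : ValHat) (ω : S.Ω) (n : ℕ) :
    fSem S I (Formula.box α φ) v ω n = L.tru ↔
      ∀ C : Cseq, (pSem S I α (.ok v) ω C n).1 ≠ Val.oob →
        ∃ w, (pSem S I α (.ok v) ω C n).1 = Val.ok w ∧
          fSem S I φ w ω (pSem S I α (.ok v) ω C n).2.2 = L.tru := by
  unfold Formula.box
  rw [fSem_not, fSem_dia]
  have hneg : ∀ x : L, (L.neg x = L.tru ↔ x = L.fls) := by decide
  rw [hneg]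
  constructor
  · intro h C hC
    have hle : runVal S I α (.not φ) v ω C n ≤ L.fls := by
      rw [← h]
      exact le_sSup ⟨C, hC, rfl⟩
    cases h1 : (pSem S I α (.ok v) ω C n).1 with
    | oob => exact absurd h1 hC
    | crash => rw [runVal_crash S I h1] at hle; exact absurd hle (by decide)
    | ok w =>
        refine ⟨w, rfl, ?_⟩
        rw [runVal_ok S I h1, fSem_not] at hle
        have hx : ∀ x : L, L.neg x ≤ L.fls → x = L.tru := by decide
        exact hx _ hle
  · intro h
    refine le_antisymm (sSup_le ?_) (Fin.zero_le _)
    rintro l ⟨C, hC, rfl⟩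
    obtain ⟨w, hw, hphi⟩ := h C hC
    rw [runVal_ok S I hw, fSem_not, hphi]
    decide

theorem box_ne_fls_iff (α : Program) (φ : Formula) (v : ValHat) (ω : S.Ω) (n : ℕ) :
    fSem S I (Formula.box α φ) v ω n ≠ L.fls ↔
      ∀ C : Cseq, (pSem S I α (.ok v) ω C n).1 ≠ Val.oob →
        ∀ w, (pSem S I α (.ok v) ω C n).1 = Val.ok w →
          fSem S I φ w ω (pSem S I α (.ok v) ω C n).2.2 ≠ L.fls := by
  unfold Formula.box
  rw [fSem_not, fSem_dia]
  have hneg : ∀ x : L, (L.neg x ≠ L.fls ↔ x ≤ L.ind) := by decide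
  rw [hneg, sSup_le_iff]
  constructor
  · intro h C hC w hw hfls
    have hle := h _ ⟨C, hC, rfl⟩
    rw [runVal_ok S I hw, fSem_not, hfls] at hle
    exact absurd hle (by decide)
  · rintro h l ⟨C, hC, rfl⟩
    cases h1 : (pSem S I α (.ok v) ω C n).1 with
    | oob => exact absurd h1 hC
    | crash => rw [runVal_crash S I h1]
    | ok w =>
        rw [runVal_ok S I h1, fSem_not]
        have hx : ∀ x : L, x ≠ L.fls → L.neg x ≤ L.ind := by decide
        exact hx _ (h C hC w h1)

end

/-- **Soundness of the loop induction axiom.**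
The formula `[α*]sure(φ → [α]φ) → sure(φ → [α*]φ)` evaluates to `⊕` under
every interpretation, at every valuation in `Val̂` and every `ω`. -/
theorem loop_induction_axiom_sound (S : SampleSpace) (I : Interp S)
    (α : Program) (hα : α.WF) (φ : Formula) (hφ : φ.WF)
    (v : ValHat) (ω : S.Ω) :
    fSem S I (Formula.imp
      (Formula.box (.star α) (.sure (Formula.imp φ (Formula.box α φ))))
      (.sure (Formula.imp φ (Formula.box (.star α) φ)))) v ω 0 = L.tru := by
  set ψ := Formula.imp φ (Formula.box α φ) with hψdef
  rw [fSem_imp_tru_iff]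
  by_cases hA : fSem S I (Formula.box (.star α) (.sure ψ)) v ω 0 = L.fls
  · exact Or.inl hA
  right
  -- Consequence of the antecedent being non-false:
  -- every OK result of a star-run satisfies the induction step `ψ`.
  have H : ∀ (C : Cseq) (w : ValHat),
      (pSem S I (.star α) (.ok v) ω C 0).1 = .ok w →
      fSem S I ψ w ω (pSem S I (.star α) (.ok v) ω C 0).2.2 = L.tru := by
    have h1 := (box_ne_fls_iff S I (.star α) (.sure ψ) v ω 0).1 hA
    intro C w hw
    have h2 := h1 C (by rw [hw]; exact fun h => Val.noConfusion h) w hw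
    by_cases h3 : fSem S I ψ w ω (pSem S I (.star α) (.ok v) ω C 0).2.2 = L.tru
    · exact h3
    · exact absurd (fSem_sure_of_ne S I h3) h2
  set a0 := fSem S I φ v ω 0 with ha0
  -- Key invariant, by induction on the number of loop iterations.
  have key : ∀ (k : ℕ) (E : Cseq), E.1 0 = false →
      (a0 = L.tru → ((iterRun S I α ω k (.ok v) E 0).1 = Val.oob ∨
        ∃ w, (iterRun S I α ω k (.ok v) E 0).1 = Val.ok w ∧
          fSem S I φ w ω (iterRun S I α ω k (.ok v) E 0).2.2 = L.tru)) ∧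
      (a0 = L.ind → ((iterRun S I α ω k (.ok v) E 0).1 = Val.oob ∨
        (iterRun S I α ω k (.ok v) E 0).1 = Val.crash ∨
        ∃ w, (iterRun S I α ω k (.ok v) E 0).1 = Val.ok w ∧
          fSem S I φ w ω (iterRun S I α ω k (.ok v) E 0).2.2 ≠ L.fls)) := by
    intro k
    induction k with
    | zero =>
        intro E hE
        constructor
        · intro h
          refine Or.inr ⟨v, rfl, ?_⟩
          show fSem S I φ v ω 0 = L.tru
          rw [← ha0]; exact h
        · intro h
          refine Or.inr (Or.inr ⟨v, rfl, ?_⟩)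
          show fSem S I φ v ω 0 ≠ L.fls
          rw [← ha0, h]; decide
    | succ k ih =>
        intro E hE
        obtain ⟨ih1, ih2⟩ := ih E hE
        rw [iterRun_succ_back]
        set r := iterRun S I α ω k (.ok v) E 0 with hr
        cases hr1 : r.1 with
        | oob =>
            rw [pSem_oob]
            exact ⟨fun _ => Or.inl rfl, fun _ => Or.inl rfl⟩
        | crash =>
            rw [pSem_crash]
            constructor
            · intro h
              rcases ih1 h with h' | ⟨w, h', _⟩ <;> rw [hr1] at h' <;> exact Val.noConfusion h'
            · intro _
              exact Or.inr (Or.inl rfl)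
        | ok w =>
            have hstar : pSem S I (.star α) (.ok v) ω (Cseq.onesThen k E) 0 = r := by
              rw [pSem_star, Cseq.nat_onesThen k E hE, Cseq.tailN_onesThen]
            have hψw := H (Cseq.onesThen k E) w (by rw [hstar, hr1])
            rw [hstar] at hψw
            rw [hψdef, fSem_imp_tru_iff] at hψw
            constructor
            · intro ha
              obtain h' | ⟨w', hw', hφw'⟩ := ih1 ha
              · rw [hr1] at h'; exact Val.noConfusion h'
              · rw [hr1] at hw'
                injection hw' with hww
                subst hww
                have hbw : fSem S I (Formula.box α φ) w ω r.2.2 = L.tru := by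
                  rcases hψw with h | h | ⟨h, _⟩
                  · rw [hφw'] at h; exact absurd h (by decide)
                  · exact h
                  · rw [hφw'] at h; exact absurd h (by decide)
                have hb := (box_tru_iff S I α φ w ω r.2.2).1 hbw r.2.1
                by_cases hoob : (pSem S I α (.ok w) ω r.2.1 r.2.2).1 = Val.oob
                · exact Or.inl hoob
                · exact Or.inr (hb hoob)
            · intro ha
              obtain h' | h' | ⟨w', hw', hφw'⟩ := ih2 ha
              · rw [hr1] at h'; exact Val.noConfusion h'
              · rw [hr1] at h'; exact Val.noConfusion h'
              · rw [hr1] at hw'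
                injection hw' with hww
                subst hww
                by_cases hoob : (pSem S I α (.ok w) ω r.2.1 r.2.2).1 = Val.oob
                · exact Or.inl hoob
                rcases hψw with h | h | ⟨_, h⟩
                · exact absurd h hφw'
                · obtain ⟨w'', hw'', hphi⟩ := (box_tru_iff S I α φ w ω r.2.2).1 h r.2.1 hoob
                  exact Or.inr (Or.inr ⟨w'', hw'', by rw [hphi]; decide⟩)
                · have hbne : fSem S I (Formula.box α φ) w ω r.2.2 ≠ L.fls := by
                    rw [h]; decide
                  have h4 := (box_ne_fls_iff S I α φ w ω r.2.2).1 hbne r.2.1 hoob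
                  cases hnext : (pSem S I α (.ok w) ω r.2.1 r.2.2).1 with
                  | oob => exact absurd hnext hoob
                  | crash => exact Or.inr (Or.inl rfl)
                  | ok w'' => exact Or.inr (Or.inr ⟨w'', rfl, h4 w'' hnext⟩)
  -- Conclude: the succedent is surely true.
  have hBinner : fSem S I (Formula.imp φ (Formula.box (.star α) φ)) v ω 0 = L.tru := by
    rw [fSem_imp_tru_iff]
    have tri : ∀ x : L, x = L.fls ∨ x = L.ind ∨ x = L.tru := by decide
    rcases tri a0 with h | h | h
    · refine Or.inl ?_
      rw [← ha0]; exact h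
    · have hb : fSem S I (Formula.box (.star α) φ) v ω 0 ≠ L.fls := by
        rw [box_ne_fls_iff]
        intro C hoob w hw
        have hE : (Cseq.tailN C.nat C).1 0 = false := by
          rw [Cseq.tailN_apply]
          simpa using Cseq.nat_false C
        have hk := (key C.nat (Cseq.tailN C.nat C) hE).2 h
        rw [← pSem_star] at hk
        rcases hk with h' | h' | ⟨w', hw', hne⟩
        · exact absurd h' hoob
        · rw [hw] at h'; exact Val.noConfusion h'
        · rw [hw] at hw'
          injection hw' with hww
          subst hww
          exact hne
      rcases tri (fSem S I (Formula.box (.star α) φ) v ω 0) with h2 | h2 | h2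
      · exact absurd h2 hb
      · exact Or.inr (Or.inr ⟨by rw [← ha0]; exact h, h2⟩)
      · exact Or.inr (Or.inl h2)
    · refine Or.inr (Or.inl ?_)
      rw [box_tru_iff]
      intro C hoob
      have hE : (Cseq.tailN C.nat C).1 0 = false := by
        rw [Cseq.tailN_apply]
        simpa using Cseq.nat_false C
      have hk := (key C.nat (Cseq.tailN C.nat C) hE).1 h
      rw [← pSem_star] at hk
      rcases hk with h' | hk
      · exact absurd h' hoob
      · exact hk
  exact Or.inl (fSem_sure_of_tru S I hBinner)
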